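/- Let (z_n) be a sequence of complex numbers such that ∑_n e^{m·Re(z_n)} < ∞ for every positive integer m. Define F(m) = ∑_n e^{m·z_n}. Then F is not identically zero on the positive integers. -/

import Mathlib

open Filter Topology

lemma finite_ge {f : ℕ → ℝ} (hf : Tendsto f atTop (𝓝 0)) {c : ℝ} (hc : 0 < c) :
    {n | c ≤ f n}.Finite := by
  have h := hf.eventually (gt_mem_nhds hc)
  rw [Filter.eventually_atTop] at h
  obtain ⟨N, hN⟩ := h
  apply Set.Finite.subset (Set.finite_Iio N)
  intro n hn
  by_contra h'
  simp only [Set.mem_Iio, not_lt] at h'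
  exact absurd (hN n h') (not_lt.2 hn)

lemma pigeon (S : Finset ℕ) (θ : ℕ → ℝ) {ε : ℝ} (hε : 0 < ε) (M : ℕ) :
    ∃ m : ℕ, M ≤ m ∧ ∀ n ∈ S, ‖Complex.exp ((m : ℂ) * ((θ n : ℂ) * Complex.I)) - 1‖ ≤ ε := by
  set f : ℕ → (S → ℂ) := fun k n => Complex.exp (((k * M : ℕ) : ℂ) * ((θ n : ℂ) * Complex.I))
    with hf
  have hb : ∀ k, f k ∈ Metric.closedBall (0 : S → ℂ) 1 := by
    intro k
    rw [Metric.mem_closedBall, dist_zero_right]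
    refine (pi_norm_le_iff_of_nonneg zero_le_one).2 fun n => ?_
    rw [hf]
    simp [Complex.norm_exp]
  obtain ⟨a, -, φ, hφ, hconv⟩ :=
    tendsto_subseq_of_bounded (Metric.isBounded_closedBall (x := (0 : S → ℂ)) (r := 1)) hb
  have hc : CauchySeq (f ∘ φ) := hconv.cauchySeq
  rw [Metric.cauchySeq_iff'] at hc
  obtain ⟨N, hN⟩ := hc ε hε
  have hlt : φ N < φ (N + 1) := hφ (Nat.lt_succ_self N)
  refine ⟨(φ (N + 1) - φ N) * M, Nat.le_mul_of_pos_left M (by omega), fun n hn => ?_⟩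
  have key : ((φ N * M : ℕ) : ℂ) + (((φ (N + 1) - φ N) * M : ℕ) : ℂ) = ((φ (N + 1) * M : ℕ) : ℂ) := by
    push_cast
    have : φ N * M + (φ (N + 1) - φ N) * M = φ (N + 1) * M := by
      rw [← Nat.add_mul]; congr 1; omega
    exact_mod_cast congrArg (Nat.cast (R := ℂ)) this
  have hid : f (φ (N+1)) ⟨n, hn⟩ - f (φ N) ⟨n, hn⟩
      = Complex.exp (((φ N * M : ℕ) : ℂ) * ((θ n : ℂ) * Complex.I)) *
        (Complex.exp ((((φ (N + 1) - φ N) * M : ℕ) : ℂ) * ((θ n : ℂ) * Complex.I)) - 1) := by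
    rw [hf]
    simp only [mul_sub, mul_one, ← Complex.exp_add, ← add_mul, key]
  have hd : dist (f (φ (N+1)) ⟨n, hn⟩) (f (φ N) ⟨n, hn⟩) < ε :=
    lt_of_le_of_lt (dist_le_pi_dist (f (φ (N+1))) (f (φ N)) ⟨n, hn⟩) (hN (N+1) (Nat.le_succ N))
  rw [dist_eq_norm, hid] at hd
  rw [norm_mul] at hd
  have : ‖Complex.exp (((φ N * M : ℕ) : ℂ) * ((θ n : ℂ) * Complex.I))‖ = 1 := by
    simp [Complex.norm_exp]
  rw [this, one_mul] at hd
  exact hd.le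

theorem stmt_1 (z : ℕ → ℂ)
    (h : ∀ m : ℕ, 1 ≤ m → Summable (fun n : ℕ => Real.exp ((m : ℝ) * (z n).re))) :
    ∃ m : ℕ, 1 ≤ m ∧ (∑' n : ℕ, Complex.exp ((m : ℂ) * z n)) ≠ 0 := by
  classical
  have h1 : Summable fun n => Real.exp (z n).re := by simpa using h 1 le_rfl
  have htend : Tendsto (fun n => Real.exp (z n).re) atTop (𝓝 0) := h1.tendsto_atTop_zero
  -- global max of real parts
  have hGfin : {n | Real.exp (z 0).re ≤ Real.exp (z n).re}.Finite :=
    finite_ge htend (Real.exp_pos _)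
  have hG0 : 0 ∈ hGfin.toFinset := by simp
  obtain ⟨n₀, hn₀G, hn₀max⟩ := hGfin.toFinset.exists_max_image (fun n => (z n).re) ⟨0, hG0⟩
  set A := (z n₀).re with hA
  have hmax : ∀ n, (z n).re ≤ A := by
    intro n
    by_cases hn : Real.exp (z 0).re ≤ Real.exp (z n).re
    · exact hn₀max n (by simpa using hn)
    · push_neg at hn
      have h0 : (z 0).re ≤ A := hn₀max 0 hG0
      have := (Real.exp_lt_exp.mp hn).le
      linarith
  -- the finite set where the max is attained
  have hSfin : {n | A ≤ (z n).re}.Finite := by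
    have h' : {n | Real.exp A ≤ Real.exp (z n).re}.Finite := finite_ge htend (Real.exp_pos _)
    convert h' using 1
    ext n; simp [Real.exp_le_exp]
  set S := hSfin.toFinset with hS
  have hn₀S : n₀ ∈ S := by simp [hS, hA]
  have hScard : 1 ≤ S.card := Finset.card_pos.2 ⟨n₀, hn₀S⟩
  have hSre : ∀ n ∈ S, (z n).re = A := by
    intro n hn
    exact le_antisymm (hmax n) (by simpa [hS] using hn)
  have hSnot : ∀ n, n ∉ S → (z n).re < A := by
    intro n hn
    have : ¬ A ≤ (z n).re := by simpa [hS] using hn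
    linarith [not_le.mp this]
  -- uniform gap δ below A outside S
  obtain ⟨δ, hδpos, hδ1, hδ⟩ : ∃ δ : ℝ, 0 < δ ∧ δ ≤ 1 ∧ ∀ n, n ∉ S → (z n).re ≤ A - δ := by
    have hUfin : {n | A - 1 ≤ (z n).re}.Finite := by
      have h' : {n | Real.exp (A - 1) ≤ Real.exp (z n).re}.Finite :=
        finite_ge htend (Real.exp_pos _)
      convert h' using 1
      ext n; simp [Real.exp_le_exp]
    set T := hUfin.toFinset.filter (fun n => (z n).re < A) with hT
    by_cases hTne : T.Nonempty
    · obtain ⟨b, hbT, hbmax⟩ := T.exists_max_image (fun n => (z n).re) hTne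
      have hb : (z b).re < A := (Finset.mem_filter.mp hbT).2
      refine ⟨min 1 (A - (z b).re), lt_min one_pos (by linarith), min_le_left _ _,
        fun n hn => ?_⟩
      have hnlt : (z n).re < A := hSnot n hn
      by_cases hnU : n ∈ hUfin.toFinset
      · have hmem : n ∈ T := Finset.mem_filter.2 ⟨hnU, hnlt⟩
        have h2 := hbmax n hmem
        have h3 := min_le_right 1 (A - (z b).re)
        linarith
      · have : ¬ (A - 1 ≤ (z n).re) := by simpa using hnU
        have h3 := min_le_left 1 (A - (z b).re)
        linarith [not_le.mp this]
    · refine ⟨1, one_pos, le_rfl, fun n hn => ?_⟩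
      have hnlt : (z n).re < A := hSnot n hn
      by_cases hnU : n ∈ hUfin.toFinset
      · exact absurd ⟨n, Finset.mem_filter.2 ⟨hnU, hnlt⟩⟩ hTne
      · have : ¬ (A - 1 ≤ (z n).re) := by simpa using hnU
        linarith [not_le.mp this]
  -- the tail constant
  set C := ∑' (n : ((S : Set ℕ)ᶜ : Set ℕ)), Real.exp (z n).re with hC
  have hCsum : Summable fun n : ((S : Set ℕ)ᶜ : Set ℕ) => Real.exp (z n).re :=
    h1.subtype _
  have hCnonneg : 0 ≤ C := tsum_nonneg fun n => (Real.exp_pos _).le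
  -- choose k with 2*C + 1 ≤ exp (A + k*δ)
  obtain ⟨k, hk⟩ : ∃ k : ℕ, 2 * C + 1 ≤ Real.exp (A + k * δ) := by
    have h2 : Tendsto (fun k : ℕ => A + (k : ℝ) * δ) atTop atTop := by
      apply tendsto_atTop_add_const_left
      exact Tendsto.atTop_mul_const hδpos tendsto_natCast_atTop_atTop
    have h3 := (Real.tendsto_exp_atTop.comp h2).eventually_ge_atTop (2 * C + 1)
    exact (h3.exists)
  -- pigeonhole
  have hcardR : (0 : ℝ) < (S.card : ℝ) := by exact_mod_cast hScard
  have hεpos : (0 : ℝ) < 1 / (2 * S.card) := div_pos one_pos (by linarith)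
  obtain ⟨m, hm, hphase⟩ := pigeon S (fun n => (z n).im) hεpos (k + 1)
  have hm1 : 1 ≤ m := le_trans (Nat.le_add_left 1 k) hm
  refine ⟨m, hm1, ?_⟩
  -- summability
  have hnorm : ∀ n, ‖Complex.exp ((m : ℂ) * z n)‖ = Real.exp ((m : ℝ) * (z n).re) := by
    intro n
    rw [Complex.norm_exp]
    congr 1
    simp [Complex.mul_re]
  have hsum : Summable fun n => Complex.exp ((m : ℂ) * z n) := by
    apply Summable.of_norm
    simpa only [hnorm] using h m hm1
  rw [← hsum.sum_add_tsum_compl (s := S)]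
  set Q := ∑' (n : ((S : Set ℕ)ᶜ : Set ℕ)), Complex.exp ((m : ℂ) * z n) with hQdef
  -- bound on Q
  have hQ : ‖Q‖ ≤ Real.exp (((m - 1 : ℕ) : ℝ) * (A - δ)) * C := by
    rw [hQdef]
    refine (norm_tsum_le_tsum_norm (by simpa only [hnorm, Function.comp_def] using (h m hm1).subtype _)).trans ?_
    rw [hC, ← tsum_mul_left]
    refine Summable.tsum_le_tsum ?_ (by simpa only [hnorm, Function.comp_def] using (h m hm1).subtype _)
      (hCsum.mul_left _)
    · intro n
      rw [hnorm]
      have hn : (n : ℕ) ∉ S := n.2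
      have hre : (z (n : ℕ)).re ≤ A - δ := hδ _ hn
      have hm' : (m : ℝ) * (z (n : ℕ)).re = ((m - 1 : ℕ) : ℝ) * (z (n : ℕ)).re + (z (n : ℕ)).re := by
        have : ((m - 1 : ℕ) : ℝ) = (m : ℝ) - 1 := by
          push_cast [Nat.cast_sub hm1]; ring
        rw [this]; ring
      rw [hm', Real.exp_add]
      exact mul_le_mul_of_nonneg_right
        (Real.exp_le_exp.2 (mul_le_mul_of_nonneg_left hre (Nat.cast_nonneg _)))
        (Real.exp_pos _).le
  -- the main term
  have hPid : ∀ n ∈ S, Complex.exp ((m : ℂ) * z n)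
      = Complex.exp ((m : ℝ) * A : ℝ) * Complex.exp ((m : ℂ) * (((z n).im : ℂ) * Complex.I)) := by
    intro n hn
    rw [← Complex.exp_add]
    congr 1
    have hzn : z n = (A : ℂ) + ((z n).im : ℂ) * Complex.I := by
      rw [← hSre n hn]; exact (Complex.re_add_im (z n)).symm
    conv_lhs => rw [hzn]
    push_cast
    ring
  have hPsum : ∑ n ∈ S, Complex.exp ((m : ℂ) * z n)
      = (Complex.exp ((m : ℝ) * A : ℝ)) * ∑ n ∈ S, Complex.exp ((m : ℂ) * (((z n).im : ℂ) * Complex.I)) := by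
    rw [Finset.mul_sum]
    exact Finset.sum_congr rfl hPid
  have hInner : (1 : ℝ) / 2 ≤ ‖∑ n ∈ S, Complex.exp ((m : ℂ) * (((z n).im : ℂ) * Complex.I))‖ := by
    have hdiff : ‖(S.card : ℂ) - ∑ n ∈ S, Complex.exp ((m : ℂ) * (((z n).im : ℂ) * Complex.I))‖ ≤ 1 / 2 := by
      have : (S.card : ℂ) - ∑ n ∈ S, Complex.exp ((m : ℂ) * (((z n).im : ℂ) * Complex.I))
          = ∑ n ∈ S, (1 - Complex.exp ((m : ℂ) * (((z n).im : ℂ) * Complex.I))) := by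
        rw [Finset.sum_sub_distrib, Finset.sum_const, nsmul_eq_mul, mul_one]
      rw [this]
      refine (norm_sum_le _ _).trans ?_
      have hb : ∀ n ∈ S, ‖1 - Complex.exp ((m : ℂ) * (((z n).im : ℂ) * Complex.I))‖ ≤ 1 / (2 * S.card) := by
        intro n hn
        rw [norm_sub_rev]
        exact hphase n hn
      refine (Finset.sum_le_sum hb).trans ?_
      rw [Finset.sum_const, nsmul_eq_mul]
      rw [mul_one_div]
      rw [div_le_div_iff₀ (by linarith) (by norm_num)]
      nlinarith [hcardR]
    have h4 : ‖(S.card : ℂ)‖ - ‖(S.card : ℂ) - ∑ n ∈ S, Complex.exp ((m : ℂ) * (((z n).im : ℂ) * Complex.I))‖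
        ≤ ‖∑ n ∈ S, Complex.exp ((m : ℂ) * (((z n).im : ℂ) * Complex.I))‖ := by
      have := norm_sub_norm_le ((S.card : ℂ)) (((S.card : ℂ)) - ∑ n ∈ S, Complex.exp ((m : ℂ) * (((z n).im : ℂ) * Complex.I)))
      simpa using this
    have h5 : ‖(S.card : ℂ)‖ = (S.card : ℝ) := by
      simp
    have h6 : (1 : ℝ) ≤ (S.card : ℝ) := Nat.one_le_cast.2 hScard
    linarith
  have hP : Real.exp ((m : ℝ) * A) * (1 / 2) ≤ ‖∑ n ∈ S, Complex.exp ((m : ℂ) * z n)‖ := by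
    rw [hPsum, norm_mul]
    have : ‖(Complex.exp ((m : ℝ) * A : ℝ))‖ = Real.exp ((m : ℝ) * A) := by
      rw [Complex.norm_exp]
      norm_num
    rw [this]
    gcongr
  -- compare
  have hcomp : Real.exp (((m - 1 : ℕ) : ℝ) * (A - δ)) * C < Real.exp ((m : ℝ) * A) * (1 / 2) := by
    have hkm : (k : ℝ) ≤ ((m - 1 : ℕ) : ℝ) := by
      have : k ≤ m - 1 := by omega
      exact_mod_cast this
    have h7 : Real.exp (A + (k : ℝ) * δ) ≤ Real.exp (A + ((m - 1 : ℕ) : ℝ) * δ) := by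
      apply Real.exp_le_exp.2
      nlinarith
    have h8 : 2 * C + 1 ≤ Real.exp (A + ((m - 1 : ℕ) : ℝ) * δ) := le_trans hk h7
    have h9 : Real.exp (((m - 1 : ℕ) : ℝ) * (A - δ)) * Real.exp (A + ((m - 1 : ℕ) : ℝ) * δ)
        = Real.exp ((m : ℝ) * A) := by
      rw [← Real.exp_add]
      congr 1
      have : ((m - 1 : ℕ) : ℝ) = (m : ℝ) - 1 := by
        push_cast [Nat.cast_sub hm1]; ring
      rw [this]; ring
    have h10 : Real.exp (((m - 1 : ℕ) : ℝ) * (A - δ)) * (2 * C + 1)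
        ≤ Real.exp ((m : ℝ) * A) := by
      rw [← h9]
      gcongr
    nlinarith [Real.exp_pos (((m - 1 : ℕ) : ℝ) * (A - δ))]
  intro heq
  have hQP : ‖Q‖ = ‖∑ n ∈ S, Complex.exp ((m : ℂ) * z n)‖ := by
    have : Q = -(∑ n ∈ S, Complex.exp ((m : ℂ) * z n)) := by
      linear_combination heq
    rw [this, norm_neg]
  have : ‖∑ n ∈ S, Complex.exp ((m : ℂ) * z n)‖ < ‖∑ n ∈ S, Complex.exp ((m : ℂ) * z n)‖ := by
    calc ‖∑ n ∈ S, Complex.exp ((m : ℂ) * z n)‖ = ‖Q‖ := hQP.symm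
    _ ≤ Real.exp (((m - 1 : ℕ) : ℝ) * (A - δ)) * C := hQ
    _ < Real.exp ((m : ℝ) * A) * (1 / 2) := hcomp
    _ ≤ ‖∑ n ∈ S, Complex.exp ((m : ℂ) * z n)‖ := hP
  exact lt_irrefl _ this
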